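/- For every binary positive one-pass relational algebra expression e over a ternary set variable S, there exist k ∈ ℕ, semi-algebraic sets Λ₁, Λ₂ ⊆ ℝ^{3+k}, and indices i₁, i₂ ∈ {1, …, k+3} such that for all S ⊆ ℝ³, e(S) = π_{i₁,i₂}(Λ₁ ∪ (Λ₂ ∩ (S × ℝᵏ))). -/

import Mathlib

open Set

def IsSemialgebraic {n : ℕ} (A : Set (Fin n → ℝ)) : Prop :=
  ∃ (N : ℕ) (E I : Fin N → Finset (MvPolynomial (Fin n) ℝ)),
    A = ⋃ m, {x | (∀ p ∈ E m, MvPolynomial.eval x p = 0) ∧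
                  (∀ p ∈ I m, 0 < MvPolynomial.eval x p)}

/-- Relational algebra expressions over a set variable of arity `n`;
`RAE n k` produces a `k`-ary output. Constant sets are required to be
semi-algebraic. -/
inductive RAE (n : ℕ) : ℕ → Type 1 where
  | var : RAE n n
  | const : {k : ℕ} → (C : Set (Fin k → ℝ)) → IsSemialgebraic C → RAE n k
  | union : {k : ℕ} → RAE n k → RAE n k → RAE n k
  | inter : {k : ℕ} → RAE n k → RAE n k → RAE n k
  | diff : {k : ℕ} → RAE n k → RAE n k → RAE n k
  | prod : {k₁ k₂ : ℕ} → RAE n k₁ → RAE n k₂ → RAE n (k₁ + k₂)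
  | proj : {k : ℕ} → (p : ℕ) → (Fin p → Fin k) → RAE n k → RAE n p

def RAE.eval {n : ℕ} : {k : ℕ} → RAE n k → Set (Fin n → ℝ) → Set (Fin k → ℝ)
  | _, .var, S => S
  | _, .const C _, _ => C
  | _, .union e₁ e₂, S => e₁.eval S ∪ e₂.eval S
  | _, .inter e₁ e₂, S => e₁.eval S ∩ e₂.eval S
  | _, .diff e₁ e₂, S => e₁.eval S \ e₂.eval S
  | _, .prod e₁ e₂, S =>
      {x | (fun i => x (Fin.castAdd _ i)) ∈ e₁.eval S ∧
           (fun i => x (Fin.natAdd _ i)) ∈ e₂.eval S}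
  | _, .proj _ idx e, S => (fun x i => x (idx i)) '' e.eval S

/-- The expression does not use the difference operator. -/
def RAE.Positive {n : ℕ} : {k : ℕ} → RAE n k → Prop
  | _, .var => True
  | _, .const _ _ => True
  | _, .union e₁ e₂ => e₁.Positive ∧ e₂.Positive
  | _, .inter e₁ e₂ => e₁.Positive ∧ e₂.Positive
  | _, .diff _ _ => False
  | _, .prod e₁ e₂ => e₁.Positive ∧ e₂.Positive
  | _, .proj _ _ e => e.Positive

/-- Number of occurrences of the set variable `S`. -/
def RAE.varCount {n : ℕ} : {k : ℕ} → RAE n k → ℕ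
  | _, .var => 1
  | _, .const _ _ => 0
  | _, .union e₁ e₂ => e₁.varCount + e₂.varCount
  | _, .inter e₁ e₂ => e₁.varCount + e₂.varCount
  | _, .diff e₁ e₂ => e₁.varCount + e₂.varCount
  | _, .prod e₁ e₂ => e₁.varCount + e₂.varCount
  | _, .proj _ _ e => e.varCount

/-- The expression does not use the cartesian product operator. -/
def RAE.ProductFree {n : ℕ} : {k : ℕ} → RAE n k → Prop
  | _, .var => True
  | _, .const _ _ => True
  | _, .union e₁ e₂ => e₁.ProductFree ∧ e₂.ProductFree
  | _, .inter e₁ e₂ => e₁.ProductFree ∧ e₂.ProductFree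
  | _, .diff e₁ e₂ => e₁.ProductFree ∧ e₂.ProductFree
  | _, .prod _ _ => False
  | _, .proj _ _ e => e.ProductFree

section SAMachinery

open MvPolynomial

lemma isSemialgebraic_preimage {a b : ℕ} (g : Fin a → Fin b) {B : Set (Fin a → ℝ)}
    (hB : IsSemialgebraic B) : IsSemialgebraic {y : Fin b → ℝ | y ∘ g ∈ B} := by
  classical
  obtain ⟨N, E, I, rfl⟩ := hB
  refine ⟨N, fun m => (E m).image (rename g), fun m => (I m).image (rename g), ?_⟩
  ext y
  simp only [Set.mem_setOf_eq, Set.mem_iUnion, Finset.forall_mem_image, eval_rename]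

lemma isSemialgebraic_empty {n : ℕ} : IsSemialgebraic (∅ : Set (Fin n → ℝ)) := by
  refine ⟨0, Fin.elim0, Fin.elim0, ?_⟩
  simp

lemma isSemialgebraic_univ {n : ℕ} : IsSemialgebraic (Set.univ : Set (Fin n → ℝ)) := by
  refine ⟨1, fun _ => ∅, fun _ => ∅, ?_⟩
  ext x; simp

lemma IsSemialgebraic.union {n : ℕ} {A B : Set (Fin n → ℝ)}
    (hA : IsSemialgebraic A) (hB : IsSemialgebraic B) : IsSemialgebraic (A ∪ B) := by
  obtain ⟨N₁, E₁, I₁, rfl⟩ := hA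
  obtain ⟨N₂, E₂, I₂, rfl⟩ := hB
  refine ⟨N₁ + N₂, Fin.append E₁ E₂, Fin.append I₁ I₂, ?_⟩
  ext x
  simp only [Set.mem_union, Set.mem_iUnion, Set.mem_setOf_eq]
  constructor
  · rintro (⟨m, h⟩ | ⟨m, h⟩)
    · exact ⟨Fin.castAdd _ m, by rwa [Fin.append_left, Fin.append_left]⟩
    · exact ⟨Fin.natAdd _ m, by rwa [Fin.append_right, Fin.append_right]⟩
  · rintro ⟨m, h⟩
    refine Fin.addCases (fun i hi => ?_) (fun i hi => ?_) m h
    · rw [Fin.append_left, Fin.append_left] at hi; exact Or.inl ⟨i, hi⟩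
    · rw [Fin.append_right, Fin.append_right] at hi; exact Or.inr ⟨i, hi⟩

lemma IsSemialgebraic.inter {n : ℕ} {A B : Set (Fin n → ℝ)}
    (hA : IsSemialgebraic A) (hB : IsSemialgebraic B) : IsSemialgebraic (A ∩ B) := by
  obtain ⟨N₁, E₁, I₁, rfl⟩ := hA
  obtain ⟨N₂, E₂, I₂, rfl⟩ := hB
  refine ⟨N₁ * N₂,
    fun m => E₁ (finProdFinEquiv.symm m).1 ∪ E₂ (finProdFinEquiv.symm m).2,
    fun m => I₁ (finProdFinEquiv.symm m).1 ∪ I₂ (finProdFinEquiv.symm m).2, ?_⟩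
  ext x
  simp only [Set.mem_inter_iff, Set.mem_iUnion, Set.mem_setOf_eq, Finset.forall_mem_union]
  constructor
  · rintro ⟨⟨m₁, h₁⟩, ⟨m₂, h₂⟩⟩
    refine ⟨finProdFinEquiv (m₁, m₂), ?_⟩
    simp only [Equiv.symm_apply_apply]
    exact ⟨⟨h₁.1, h₂.1⟩, ⟨h₁.2, h₂.2⟩⟩
  · rintro ⟨m, ⟨⟨h₁, h₂⟩, ⟨h₃, h₄⟩⟩⟩
    exact ⟨⟨_, h₁, h₃⟩, ⟨_, h₂, h₄⟩⟩

lemma isSemialgebraic_eqs {n p : ℕ} (f g : Fin p → Fin n) :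
    IsSemialgebraic {x : Fin n → ℝ | ∀ i, x (f i) = x (g i)} := by
  classical
  refine ⟨1, fun _ => Finset.univ.image (fun i => (X (f i) - X (g i) : MvPolynomial (Fin n) ℝ)),
    fun _ => ∅, ?_⟩
  ext x
  simp only [Set.mem_setOf_eq, Set.mem_iUnion, Finset.forall_mem_image, Finset.mem_univ,
    forall_true_left, map_sub, eval_X, Finset.notMem_empty, false_implies, implies_true,
    and_true, sub_eq_zero]
  exact ⟨fun h => ⟨0, fun i => h i⟩, fun ⟨_, h⟩ => h⟩

/-- Semialgebraicity over an arbitrary finite index type. -/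
def SA {ι : Type} [Fintype ι] (A : Set (ι → ℝ)) : Prop :=
  IsSemialgebraic {y : Fin (Fintype.card ι) → ℝ | y ∘ (Fintype.equivFin ι) ∈ A}

lemma SA.preimage {ι κ : Type} [Fintype ι] [Fintype κ] (ρ : ι → κ) {A : Set (ι → ℝ)}
    (hA : SA A) : SA {x : κ → ℝ | x ∘ ρ ∈ A} := by
  have h := isSemialgebraic_preimage
    (g := (Fintype.equivFin κ) ∘ ρ ∘ (Fintype.equivFin ι).symm) hA
  unfold SA
  have hset : {y : Fin (Fintype.card κ) → ℝ | y ∘ (Fintype.equivFin κ) ∈ {x : κ → ℝ | x ∘ ρ ∈ A}}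
      = {y | y ∘ ((Fintype.equivFin κ) ∘ ρ ∘ (Fintype.equivFin ι).symm)
          ∈ {y | y ∘ (Fintype.equivFin ι) ∈ A}} := by
    ext y
    simp only [Set.mem_setOf_eq]
    have : (y ∘ ⇑(Fintype.equivFin κ) ∘ ρ ∘ ⇑(Fintype.equivFin ι).symm) ∘ ⇑(Fintype.equivFin ι)
        = (y ∘ ⇑(Fintype.equivFin κ)) ∘ ρ := by
      ext i; simp [Function.comp]
    rw [this]
  rw [hset]; exact h

lemma SA_of_isSemialgebraic {n : ℕ} {A : Set (Fin n → ℝ)} (hA : IsSemialgebraic A) : SA A :=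
  isSemialgebraic_preimage (g := (Fintype.equivFin (Fin n) : Fin n → Fin (Fintype.card (Fin n)))) hA

lemma isSemialgebraic_of_SA {n : ℕ} {A : Set (Fin n → ℝ)} (hA : SA A) : IsSemialgebraic A := by
  have h := isSemialgebraic_preimage (g := ((Fintype.equivFin (Fin n)).symm : _ → Fin n)) hA
  have hset : {z : Fin n → ℝ | z ∘ ⇑(Fintype.equivFin (Fin n)).symm
      ∈ {y | y ∘ ⇑(Fintype.equivFin (Fin n)) ∈ A}} = A := by
    ext z
    simp only [Set.mem_setOf_eq]
    have : (z ∘ ⇑(Fintype.equivFin (Fin n)).symm) ∘ ⇑(Fintype.equivFin (Fin n)) = z := by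
      ext i; simp [Function.comp]
    rw [this]
  rw [← hset]; exact h

lemma SA.union {ι : Type} [Fintype ι] {A B : Set (ι → ℝ)} (hA : SA A) (hB : SA B) :
    SA (A ∪ B) := by
  have : {y : Fin (Fintype.card ι) → ℝ | y ∘ (Fintype.equivFin ι) ∈ A ∪ B}
      = {y | y ∘ (Fintype.equivFin ι) ∈ A} ∪ {y | y ∘ (Fintype.equivFin ι) ∈ B} := rfl
  unfold SA; rw [this]; exact IsSemialgebraic.union hA hB

lemma SA.inter {ι : Type} [Fintype ι] {A B : Set (ι → ℝ)} (hA : SA A) (hB : SA B) :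
    SA (A ∩ B) := by
  have : {y : Fin (Fintype.card ι) → ℝ | y ∘ (Fintype.equivFin ι) ∈ A ∩ B}
      = {y | y ∘ (Fintype.equivFin ι) ∈ A} ∩ {y | y ∘ (Fintype.equivFin ι) ∈ B} := rfl
  unfold SA; rw [this]; exact IsSemialgebraic.inter hA hB

lemma SA_empty {ι : Type} [Fintype ι] : SA (∅ : Set (ι → ℝ)) := by
  have : {y : Fin (Fintype.card ι) → ℝ | y ∘ (Fintype.equivFin ι) ∈ (∅ : Set (ι → ℝ))}
      = ∅ := rfl
  unfold SA; rw [this]; exact isSemialgebraic_empty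

lemma SA_univ {ι : Type} [Fintype ι] : SA (Set.univ : Set (ι → ℝ)) := by
  have : {y : Fin (Fintype.card ι) → ℝ | y ∘ (Fintype.equivFin ι) ∈ (Set.univ : Set (ι → ℝ))}
      = Set.univ := by ext y; simp
  unfold SA; rw [this]; exact isSemialgebraic_univ

lemma SA_eqs {ι : Type} [Fintype ι] {p : ℕ} (f g : Fin p → ι) :
    SA {x : ι → ℝ | ∀ i, x (f i) = x (g i)} := by
  have : {y : Fin (Fintype.card ι) → ℝ | y ∘ (Fintype.equivFin ι) ∈ {x : ι → ℝ | ∀ i, x (f i) = x (g i)}}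
      = {y | ∀ i, y ((Fintype.equivFin ι) (f i)) = y ((Fintype.equivFin ι) (g i))} := rfl
  unfold SA; rw [this]; exact isSemialgebraic_eqs _ _

end SAMachinery
section RepLayer

/-- `F` is representable as a fixed projection of a fixed semialgebraic set. -/
def Defin (m : ℕ) (F : Set (Fin 3 → ℝ) → Set (Fin m → ℝ)) : Prop :=
  ∃ (ι : Type) (inst : Fintype ι) (B : Set (ι → ℝ)) (idx : Fin m → ι),
    @SA ι inst B ∧ ∀ S, F S = (fun x => x ∘ idx) '' B

/-- The normal form of the theorem, over an abstract finite index type. -/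
def RepN (m : ℕ) (F : Set (Fin 3 → ℝ) → Set (Fin m → ℝ)) : Prop :=
  ∃ (ι : Type) (inst : Fintype ι) (Λ₁ Λ₂ : Set (ι → ℝ)) (ja : Fin 3 → ι) (idx : Fin m → ι),
    Function.Injective ja ∧ @SA ι inst Λ₁ ∧ @SA ι inst Λ₂ ∧
    ∀ S, F S = (fun x => x ∘ idx) '' (Λ₁ ∪ (Λ₂ ∩ {x | x ∘ ja ∈ S}))

lemma Defin.const {m : ℕ} {C : Set (Fin m → ℝ)} (hC : IsSemialgebraic C) :
    Defin m (fun _ => C) := by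
  refine ⟨Fin m, inferInstance, C, id, SA_of_isSemialgebraic hC, fun S => ?_⟩
  have : (fun (x : Fin m → ℝ) => x ∘ id) = id := rfl
  rw [this, Set.image_id]

lemma Defin.union {m : ℕ} {F G : Set (Fin 3 → ℝ) → Set (Fin m → ℝ)}
    (hF : Defin m F) (hG : Defin m G) : Defin m (fun S => F S ∪ G S) := by
  obtain ⟨ι₁, i₁, B₁, idx₁, hB₁, hFe⟩ := hF
  obtain ⟨ι₂, i₂, B₂, idx₂, hB₂, hGe⟩ := hG
  letI := i₁; letI := i₂
  refine ⟨ι₁ ⊕ ι₂ ⊕ Fin m, inferInstance,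
    ({x | x ∘ Sum.inl ∈ B₁} ∩ {x | ∀ i, x (Sum.inr (Sum.inr i)) = x (Sum.inl (idx₁ i))})
      ∪ ({x | x ∘ (Sum.inr ∘ Sum.inl) ∈ B₂}
          ∩ {x | ∀ i, x (Sum.inr (Sum.inr i)) = x (Sum.inr (Sum.inl (idx₂ i)))}),
    fun i => Sum.inr (Sum.inr i),
    SA.union (SA.inter (SA.preimage _ hB₁) (SA_eqs _ _))
      (SA.inter (SA.preimage _ hB₂) (SA_eqs _ _)), fun S => ?_⟩
  show F S ∪ G S = _
  rw [hFe S, hGe S]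
  ext v
  constructor
  · rintro (⟨y, hy, rfl⟩ | ⟨w, hw, rfl⟩)
    · exact ⟨Sum.elim y (Sum.elim (fun _ => 0) (y ∘ idx₁)),
        Or.inl ⟨hy, fun i => rfl⟩, rfl⟩
    · exact ⟨Sum.elim (fun _ => 0) (Sum.elim w (w ∘ idx₂)),
        Or.inr ⟨hw, fun i => rfl⟩, rfl⟩
  · rintro ⟨x, (⟨hx, he⟩ | ⟨hx, he⟩), rfl⟩
    · exact Or.inl ⟨x ∘ Sum.inl, hx, funext fun i => (he i).symm⟩
    · exact Or.inr ⟨x ∘ (Sum.inr ∘ Sum.inl), hx, funext fun i => (he i).symm⟩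

lemma Defin.inter {m : ℕ} {F G : Set (Fin 3 → ℝ) → Set (Fin m → ℝ)}
    (hF : Defin m F) (hG : Defin m G) : Defin m (fun S => F S ∩ G S) := by
  obtain ⟨ι₁, i₁, B₁, idx₁, hB₁, hFe⟩ := hF
  obtain ⟨ι₂, i₂, B₂, idx₂, hB₂, hGe⟩ := hG
  letI := i₁; letI := i₂
  refine ⟨ι₁ ⊕ ι₂ ⊕ Fin m, inferInstance,
    (({x | x ∘ Sum.inl ∈ B₁} ∩ {x | x ∘ (Sum.inr ∘ Sum.inl) ∈ B₂})
      ∩ {x | ∀ i, x (Sum.inr (Sum.inr i)) = x (Sum.inl (idx₁ i))})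
      ∩ {x | ∀ i, x (Sum.inr (Sum.inr i)) = x (Sum.inr (Sum.inl (idx₂ i)))},
    fun i => Sum.inr (Sum.inr i),
    SA.inter (SA.inter (SA.inter (SA.preimage _ hB₁) (SA.preimage _ hB₂)) (SA_eqs _ _))
      (SA_eqs _ _), fun S => ?_⟩
  show F S ∩ G S = _
  rw [hFe S, hGe S]
  ext v
  constructor
  · rintro ⟨⟨y, hy, rfl⟩, ⟨w, hw, hw2⟩⟩
    exact ⟨Sum.elim y (Sum.elim w (y ∘ idx₁)),
      ⟨⟨⟨hy, hw⟩, fun i => rfl⟩, fun i => (congrFun hw2 i).symm⟩, rfl⟩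
  · rintro ⟨x, ⟨⟨⟨h₁, h₂⟩, he₁⟩, he₂⟩, rfl⟩
    exact ⟨⟨x ∘ Sum.inl, h₁, funext fun i => (he₁ i).symm⟩,
      ⟨x ∘ (Sum.inr ∘ Sum.inl), h₂, funext fun i => (he₂ i).symm⟩⟩

lemma Defin.image {m p : ℕ} (σ : Fin p → Fin m) {F : Set (Fin 3 → ℝ) → Set (Fin m → ℝ)}
    (hF : Defin m F) : Defin p (fun S => (fun x i => x (σ i)) '' F S) := by
  obtain ⟨ι, i, B, idx, hB, hFe⟩ := hF
  letI := i
  refine ⟨ι, inferInstance, B, idx ∘ σ, hB, fun S => ?_⟩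
  show (fun x i => x (σ i)) '' F S = _
  rw [hFe S, ← Set.image_comp]
  rfl

lemma Defin.preimage {m m' : ℕ} (g : Fin m → Fin m') {F : Set (Fin 3 → ℝ) → Set (Fin m → ℝ)}
    (hF : Defin m F) : Defin m' (fun S => {v | v ∘ g ∈ F S}) := by
  obtain ⟨ι, i, B, idx, hB, hFe⟩ := hF
  letI := i
  refine ⟨ι ⊕ Fin m', inferInstance,
    {x | x ∘ Sum.inl ∈ B} ∩ {x | ∀ i, x (Sum.inr (g i)) = x (Sum.inl (idx i))},
    Sum.inr, SA.inter (SA.preimage _ hB) (SA_eqs _ _), fun S => ?_⟩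
  show {v | v ∘ g ∈ F S} = _
  ext v
  simp only [Set.mem_setOf_eq, hFe S]
  constructor
  · rintro ⟨y, hy, hyv⟩
    exact ⟨Sum.elim y v, ⟨hy, fun i => (congrFun hyv i).symm⟩, rfl⟩
  · rintro ⟨x, ⟨hx, he⟩, rfl⟩
    exact ⟨x ∘ Sum.inl, hx, funext fun i => (he i).symm⟩

lemma RepN.var : RepN 3 (fun S => S) := by
  refine ⟨Fin 3, inferInstance, ∅, Set.univ, id, id, fun a b h => h, SA_empty, SA_univ,
    fun S => ?_⟩
  have h1 : (fun (x : Fin 3 → ℝ) => x ∘ id) = id := rfl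
  have h2 : {x : Fin 3 → ℝ | x ∘ id ∈ S} = S := rfl
  rw [h1, Set.image_id, h2, Set.empty_union, Set.univ_inter]

lemma RepN.of_defin {m : ℕ} {F : Set (Fin 3 → ℝ) → Set (Fin m → ℝ)}
    (hF : Defin m F) : RepN m F := by
  obtain ⟨ι, i, B, idx, hB, hFe⟩ := hF
  letI := i
  refine ⟨Fin 3 ⊕ ι, inferInstance, {x | x ∘ Sum.inr ∈ B}, ∅, Sum.inl, Sum.inr ∘ idx,
    Sum.inl_injective, SA.preimage _ hB, SA_empty, fun S => ?_⟩
  show F S = _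
  rw [hFe S, Set.empty_inter, Set.union_empty]
  ext v
  constructor
  · rintro ⟨y, hy, rfl⟩
    exact ⟨Sum.elim (fun _ => 0) y, hy, rfl⟩
  · rintro ⟨x, hx, rfl⟩
    exact ⟨x ∘ Sum.inr, hx, rfl⟩

lemma RepN.union_defin {m : ℕ} {F G : Set (Fin 3 → ℝ) → Set (Fin m → ℝ)}
    (hF : RepN m F) (hG : Defin m G) : RepN m (fun S => F S ∪ G S) := by
  obtain ⟨ι₁, i₁, L₁, L₂, ja₁, idx₁, hja, hL₁, hL₂, hFe⟩ := hF
  obtain ⟨ι₂, i₂, B, idx₂, hB, hGe⟩ := hG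
  letI := i₁; letI := i₂
  refine ⟨ι₁ ⊕ ι₂ ⊕ Fin m, inferInstance,
    ({x | x ∘ Sum.inl ∈ L₁} ∩ {x | ∀ i, x (Sum.inr (Sum.inr i)) = x (Sum.inl (idx₁ i))})
      ∪ ({x | x ∘ (Sum.inr ∘ Sum.inl) ∈ B}
          ∩ {x | ∀ i, x (Sum.inr (Sum.inr i)) = x (Sum.inr (Sum.inl (idx₂ i)))}),
    {x | x ∘ Sum.inl ∈ L₂} ∩ {x | ∀ i, x (Sum.inr (Sum.inr i)) = x (Sum.inl (idx₁ i))},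
    Sum.inl ∘ ja₁, fun i => Sum.inr (Sum.inr i),
    Sum.inl_injective.comp hja,
    SA.union (SA.inter (SA.preimage _ hL₁) (SA_eqs _ _))
      (SA.inter (SA.preimage _ hB) (SA_eqs _ _)),
    SA.inter (SA.preimage _ hL₂) (SA_eqs _ _), fun S => ?_⟩
  show F S ∪ G S = _
  rw [hFe S, hGe S]
  ext v
  constructor
  · rintro (⟨y, hy, rfl⟩ | ⟨w, hw, rfl⟩)
    · rcases hy with hy | ⟨hy, hyc⟩
      · exact ⟨Sum.elim y (Sum.elim (fun _ => 0) (y ∘ idx₁)),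
          Or.inl (Or.inl ⟨hy, fun i => rfl⟩), rfl⟩
      · exact ⟨Sum.elim y (Sum.elim (fun _ => 0) (y ∘ idx₁)),
          Or.inr ⟨⟨hy, fun i => rfl⟩, hyc⟩, rfl⟩
    · exact ⟨Sum.elim (fun _ => 0) (Sum.elim w (w ∘ idx₂)),
        Or.inl (Or.inr ⟨hw, fun i => rfl⟩), rfl⟩
  · rintro ⟨x, (⟨hx, he⟩ | ⟨hx, he⟩) | ⟨⟨hx, he⟩, hc⟩, rfl⟩
    · exact Or.inl ⟨x ∘ Sum.inl, Or.inl hx, funext fun i => (he i).symm⟩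
    · exact Or.inr ⟨x ∘ (Sum.inr ∘ Sum.inl), hx, funext fun i => (he i).symm⟩
    · exact Or.inl ⟨x ∘ Sum.inl, Or.inr ⟨hx, hc⟩, funext fun i => (he i).symm⟩

lemma RepN.inter_defin {m : ℕ} {F G : Set (Fin 3 → ℝ) → Set (Fin m → ℝ)}
    (hF : RepN m F) (hG : Defin m G) : RepN m (fun S => F S ∩ G S) := by
  obtain ⟨ι₁, i₁, L₁, L₂, ja₁, idx₁, hja, hL₁, hL₂, hFe⟩ := hF
  obtain ⟨ι₂, i₂, B, idx₂, hB, hGe⟩ := hG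
  letI := i₁; letI := i₂
  refine ⟨ι₁ ⊕ ι₂ ⊕ Fin m, inferInstance,
    (({x | x ∘ Sum.inl ∈ L₁} ∩ {x | x ∘ (Sum.inr ∘ Sum.inl) ∈ B})
      ∩ {x | ∀ i, x (Sum.inr (Sum.inr i)) = x (Sum.inl (idx₁ i))})
      ∩ {x | ∀ i, x (Sum.inr (Sum.inr i)) = x (Sum.inr (Sum.inl (idx₂ i)))},
    (({x | x ∘ Sum.inl ∈ L₂} ∩ {x | x ∘ (Sum.inr ∘ Sum.inl) ∈ B})
      ∩ {x | ∀ i, x (Sum.inr (Sum.inr i)) = x (Sum.inl (idx₁ i))})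
      ∩ {x | ∀ i, x (Sum.inr (Sum.inr i)) = x (Sum.inr (Sum.inl (idx₂ i)))},
    Sum.inl ∘ ja₁, fun i => Sum.inr (Sum.inr i),
    Sum.inl_injective.comp hja,
    SA.inter (SA.inter (SA.inter (SA.preimage _ hL₁) (SA.preimage _ hB)) (SA_eqs _ _))
      (SA_eqs _ _),
    SA.inter (SA.inter (SA.inter (SA.preimage _ hL₂) (SA.preimage _ hB)) (SA_eqs _ _))
      (SA_eqs _ _), fun S => ?_⟩
  show F S ∩ G S = _
  rw [hFe S, hGe S]
  ext v
  constructor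
  · rintro ⟨⟨y, hy, rfl⟩, ⟨w, hw, hw2⟩⟩
    rcases hy with hy | ⟨hy, hyc⟩
    · exact ⟨Sum.elim y (Sum.elim w (y ∘ idx₁)),
        Or.inl ⟨⟨⟨hy, hw⟩, fun i => rfl⟩, fun i => (congrFun hw2 i).symm⟩, rfl⟩
    · exact ⟨Sum.elim y (Sum.elim w (y ∘ idx₁)),
        Or.inr ⟨⟨⟨⟨hy, hw⟩, fun i => rfl⟩, fun i => (congrFun hw2 i).symm⟩, hyc⟩, rfl⟩
  · rintro ⟨x, ⟨⟨⟨h₁, h₂⟩, he₁⟩, he₂⟩ | ⟨⟨⟨⟨h₁, h₂⟩, he₁⟩, he₂⟩, hc⟩, rfl⟩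
    · exact ⟨⟨x ∘ Sum.inl, Or.inl h₁, funext fun i => (he₁ i).symm⟩,
        ⟨x ∘ (Sum.inr ∘ Sum.inl), h₂, funext fun i => (he₂ i).symm⟩⟩
    · exact ⟨⟨x ∘ Sum.inl, Or.inr ⟨h₁, hc⟩, funext fun i => (he₁ i).symm⟩,
        ⟨x ∘ (Sum.inr ∘ Sum.inl), h₂, funext fun i => (he₂ i).symm⟩⟩

lemma RepN.image {m p : ℕ} (σ : Fin p → Fin m) {F : Set (Fin 3 → ℝ) → Set (Fin m → ℝ)}
    (hF : RepN m F) : RepN p (fun S => (fun x i => x (σ i)) '' F S) := by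
  obtain ⟨ι, i, L₁, L₂, ja, idx, hja, hL₁, hL₂, hFe⟩ := hF
  letI := i
  refine ⟨ι, inferInstance, L₁, L₂, ja, idx ∘ σ, hja, hL₁, hL₂, fun S => ?_⟩
  show (fun x i => x (σ i)) '' F S = _
  rw [hFe S, ← Set.image_comp]
  rfl

lemma RepN.preimage {m m' : ℕ} (g : Fin m → Fin m') {F : Set (Fin 3 → ℝ) → Set (Fin m → ℝ)}
    (hF : RepN m F) : RepN m' (fun S => {v | v ∘ g ∈ F S}) := by
  obtain ⟨ι, i, L₁, L₂, ja, idx, hja, hL₁, hL₂, hFe⟩ := hF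
  letI := i
  refine ⟨ι ⊕ Fin m', inferInstance,
    {x | x ∘ Sum.inl ∈ L₁} ∩ {x | ∀ i, x (Sum.inr (g i)) = x (Sum.inl (idx i))},
    {x | x ∘ Sum.inl ∈ L₂} ∩ {x | ∀ i, x (Sum.inr (g i)) = x (Sum.inl (idx i))},
    Sum.inl ∘ ja, Sum.inr,
    Sum.inl_injective.comp hja,
    SA.inter (SA.preimage _ hL₁) (SA_eqs _ _),
    SA.inter (SA.preimage _ hL₂) (SA_eqs _ _), fun S => ?_⟩
  show {v | v ∘ g ∈ F S} = _
  ext v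
  simp only [Set.mem_setOf_eq, hFe S]
  constructor
  · rintro ⟨y, hy | ⟨hy, hyc⟩, hyv⟩
    · exact ⟨Sum.elim y v, Or.inl ⟨hy, fun i => (congrFun hyv i).symm⟩, rfl⟩
    · exact ⟨Sum.elim y v, Or.inr ⟨⟨hy, fun i => (congrFun hyv i).symm⟩, hyc⟩, rfl⟩
  · rintro ⟨x, ⟨hx, he⟩ | ⟨⟨hx, he⟩, hc⟩, rfl⟩
    · exact ⟨x ∘ Sum.inl, Or.inl hx, funext fun i => (he i).symm⟩
    · exact ⟨x ∘ Sum.inl, Or.inr ⟨hx, hc⟩, funext fun i => (he i).symm⟩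

end RepLayer
lemma RepN.defin_union {m : ℕ} {F G : Set (Fin 3 → ℝ) → Set (Fin m → ℝ)}
    (hG : Defin m G) (hF : RepN m F) : RepN m (fun S => G S ∪ F S) := by
  have h := RepN.union_defin hF hG
  have he : (fun S => F S ∪ G S) = (fun S => G S ∪ F S) :=
    funext fun S => Set.union_comm _ _
  rwa [he] at h

lemma RepN.defin_inter {m : ℕ} {F G : Set (Fin 3 → ℝ) → Set (Fin m → ℝ)}
    (hG : Defin m G) (hF : RepN m F) : RepN m (fun S => G S ∩ F S) := by
  have h := RepN.inter_defin hF hG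
  have he : (fun S => F S ∩ G S) = (fun S => G S ∩ F S) :=
    funext fun S => Set.inter_comm _ _
  rwa [he] at h

lemma key : ∀ {m : ℕ} (e : RAE 3 m), e.Positive →
    (e.varCount = 0 → Defin m e.eval) ∧ (e.varCount ≤ 1 → RepN m e.eval) := by
  intro m e
  induction e with
  | var =>
    intro _
    exact ⟨fun h => by simp [RAE.varCount] at h, fun _ => RepN.var⟩
  | const C hC =>
    intro _
    exact ⟨fun _ => Defin.const hC, fun _ => RepN.of_defin (Defin.const hC)⟩
  | union e₁ e₂ ih₁ ih₂ =>
    rintro ⟨h₁, h₂⟩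
    constructor
    · intro h0
      have h0' : e₁.varCount + e₂.varCount = 0 := h0
      exact Defin.union ((ih₁ h₁).1 (by omega)) ((ih₂ h₂).1 (by omega))
    · intro hle
      have hle' : e₁.varCount + e₂.varCount ≤ 1 := hle
      rcases Nat.eq_zero_or_pos e₂.varCount with hz | hp
      · exact RepN.union_defin ((ih₁ h₁).2 (by omega)) ((ih₂ h₂).1 hz)
      · exact RepN.defin_union ((ih₁ h₁).1 (by omega)) ((ih₂ h₂).2 (by omega))
  | inter e₁ e₂ ih₁ ih₂ =>
    rintro ⟨h₁, h₂⟩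
    constructor
    · intro h0
      have h0' : e₁.varCount + e₂.varCount = 0 := h0
      exact Defin.inter ((ih₁ h₁).1 (by omega)) ((ih₂ h₂).1 (by omega))
    · intro hle
      have hle' : e₁.varCount + e₂.varCount ≤ 1 := hle
      rcases Nat.eq_zero_or_pos e₂.varCount with hz | hp
      · exact RepN.inter_defin ((ih₁ h₁).2 (by omega)) ((ih₂ h₂).1 hz)
      · exact RepN.defin_inter ((ih₁ h₁).1 (by omega)) ((ih₂ h₂).2 (by omega))
  | diff e₁ e₂ ih₁ ih₂ =>
    intro hpos
    exact absurd hpos (by simp [RAE.Positive])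
  | @prod k₁ k₂ e₁ e₂ ih₁ ih₂ =>
    rintro ⟨h₁, h₂⟩
    constructor
    · intro h0
      have h0' : e₁.varCount + e₂.varCount = 0 := h0
      exact Defin.inter (Defin.preimage (Fin.castAdd k₂) ((ih₁ h₁).1 (by omega)))
        (Defin.preimage (Fin.natAdd k₁) ((ih₂ h₂).1 (by omega)))
    · intro hle
      have hle' : e₁.varCount + e₂.varCount ≤ 1 := hle
      rcases Nat.eq_zero_or_pos e₂.varCount with hz | hp
      · exact RepN.inter_defin (RepN.preimage (Fin.castAdd k₂) ((ih₁ h₁).2 (by omega)))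
          (Defin.preimage (Fin.natAdd k₁) ((ih₂ h₂).1 hz))
      · exact RepN.defin_inter (Defin.preimage (Fin.castAdd k₂) ((ih₁ h₁).1 (by omega)))
          (RepN.preimage (Fin.natAdd k₁) ((ih₂ h₂).2 (by omega)))
  | proj p σ e ih =>
    intro hpos
    have h := ih hpos
    exact ⟨fun h0 => Defin.image σ (h.1 h0), fun hle => RepN.image σ (h.2 hle)⟩
theorem stmt10 (e : RAE 3 2) (hpos : e.Positive) (hone : e.varCount = 1) :
    ∃ (k : ℕ) (Λ₁ Λ₂ : Set (Fin (3 + k) → ℝ)),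
      IsSemialgebraic Λ₁ ∧ IsSemialgebraic Λ₂ ∧
      ∃ i₁ i₂ : Fin (3 + k), ∀ S : Set (Fin 3 → ℝ),
        e.eval S =
          (fun x : Fin (3 + k) → ℝ => ![x i₁, x i₂]) ''
            (Λ₁ ∪ (Λ₂ ∩ {x | (fun i => x (Fin.castAdd k i)) ∈ S})) := by
  classical
  obtain ⟨ι, inst, L₁, L₂, ja, idx, hja, hL₁, hL₂, hFe⟩ := (key e hpos).2 hone.le
  letI := inst
  letI : DecidablePred (· ∈ Set.range ja) := Classical.decPred _
  set k := Fintype.card ↥(Set.range ja)ᶜ with hk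
  let ε : ι ≃ Fin (3 + k) :=
    ((Equiv.Set.sumCompl (Set.range ja)).symm.trans
      (Equiv.sumCongr (Equiv.ofInjective ja hja).symm (Fintype.equivFin _))).trans
      finSumFinEquiv
  have hε : ∀ i, ε (ja i) = Fin.castAdd k i := by
    intro i
    show finSumFinEquiv _ = _
    rw [Equiv.trans_apply, Equiv.Set.sumCompl_symm_apply_of_mem (Set.mem_range_self i)]
    simp only [Equiv.sumCongr_apply, Sum.map_inl, Equiv.ofInjective_symm_apply]
    exact finSumFinEquiv_apply_left i
  have hsurj : Function.Surjective (fun x : Fin (3 + k) → ℝ => x ∘ ε) := by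
    intro y
    exact ⟨y ∘ ε.symm, by ext i; simp⟩
  refine ⟨k, {x | x ∘ ε ∈ L₁}, {x | x ∘ ε ∈ L₂},
    isSemialgebraic_of_SA (SA.preimage ε hL₁),
    isSemialgebraic_of_SA (SA.preimage ε hL₂),
    ε (idx 0), ε (idx 1), fun S => ?_⟩
  rw [hFe S]
  have hcomp : (fun x : Fin (3 + k) → ℝ => ![x (ε (idx 0)), x (ε (idx 1))])
      = (fun y : ι → ℝ => y ∘ idx) ∘ (fun x : Fin (3 + k) → ℝ => x ∘ ε) := by
    funext x
    funext j
    fin_cases j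
    · rfl
    · rfl
  rw [hcomp, Set.image_comp]
  have hcyl : {x : Fin (3 + k) → ℝ | (fun i => x (Fin.castAdd k i)) ∈ S}
      = {x | (x ∘ ⇑ε) ∘ ja ∈ S} := by
    ext x
    have hx : (x ∘ ⇑ε) ∘ ja = fun i => x (Fin.castAdd k i) := by
      funext i
      show x (ε (ja i)) = _
      rw [hε i]
    simp only [Set.mem_setOf_eq, hx]
  have hpre : {x : Fin (3 + k) → ℝ | x ∘ ε ∈ L₁}
        ∪ ({x | x ∘ ε ∈ L₂} ∩ {x | (fun i => x (Fin.castAdd k i)) ∈ S})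
      = (fun x : Fin (3 + k) → ℝ => x ∘ ε) ⁻¹' (L₁ ∪ (L₂ ∩ {y | y ∘ ja ∈ S})) := by
    rw [hcyl]
    rfl
  rw [hpre, Set.image_preimage_eq _ hsurj]
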